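/- For every nonnegative integer n, \int_0^1 u^n \left( \frac{1}{\log u} + \frac{1}{1-u} \right) du = \gamma - S_n, where S_n = \sum_{k=1}^n \frac{1}{k} - \log(n+1) and \gamma is Euler's constant. -/
import Mathlib


open Finset intervalIntegral

noncomputable def H (m : ℕ) : ℝ := ∑ j ∈ Finset.range m, (1 : ℝ) / (j + 1)

open MeasureTheory Real Set

lemma aux_bounds {u : ℝ} (h0 : 0 < u) (h1 : u < 1) :
    0 ≤ 1 / Real.log u + 1 / (1 - u) ∧ 1 / Real.log u + 1 / (1 - u) ≤ 1 := by
  have hL : Real.log u < 0 := Real.log_neg h0 h1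
  have h1u : 0 < 1 - u := by linarith
  have hle : 1 - u ≤ -Real.log u := by
    have := Real.log_le_sub_one_of_pos h0
    linarith
  have hnegL : 0 < -Real.log u := by linarith
  have key2 : u * (-Real.log u) ≤ 1 - u := by
    have hinv : Real.log u⁻¹ ≤ u⁻¹ - 1 := Real.log_le_sub_one_of_pos (by positivity)
    have hrw : -Real.log u = Real.log u⁻¹ := (Real.log_inv u).symm
    rw [hrw]
    calc u * Real.log u⁻¹ ≤ u * (u⁻¹ - 1) := by nlinarith
      _ = 1 - u := by field_simp
  have heq : 1 / Real.log u = -(1 / (-Real.log u)) := by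
    rw [one_div_neg_eq_neg_one_div]; ring_nf
  constructor
  · have h2 : 1 / (-Real.log u) ≤ 1 / (1 - u) := one_div_le_one_div_of_le h1u hle
    linarith
  · have h3 : u / (1 - u) ≤ 1 / (-Real.log u) := by
      rw [div_le_div_iff₀ h1u hnegL]
      linarith
    have h4 : 1 / (1 - u) - u / (1 - u) = 1 := by field_simp
    linarith

lemma boundedII {g : ℝ → ℝ} (hm : Measurable g)
    (hb : ∀ u ∈ Set.Ioc (0:ℝ) 1, |g u| ≤ 1) : IntervalIntegrable g volume 0 1 := by
  rw [intervalIntegrable_iff_integrableOn_Ioc_of_le zero_le_one]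
  refine ⟨hm.aestronglyMeasurable, ?_⟩
  apply MeasureTheory.HasFiniteIntegral.of_bounded (C := 1)
  filter_upwards [ae_restrict_mem measurableSet_Ioc] with u hu
  simpa [Real.norm_eq_abs] using hb u hu

lemma f_meas (n : ℕ) : Measurable (fun u : ℝ => u ^ n * (1 / Real.log u + 1 / (1 - u))) := by
  apply (measurable_id.pow_const n).mul
  apply Measurable.add
  · simp only [one_div]; exact Real.measurable_log.inv
  · simp only [one_div]; exact (measurable_const.sub measurable_id).inv

lemma f_integrable (n : ℕ) :
    IntervalIntegrable (fun u : ℝ => u ^ n * (1 / Real.log u + 1 / (1 - u))) volume 0 1 := by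
  refine boundedII (f_meas n) (fun u hu => ?_)
  rcases eq_or_lt_of_le hu.2 with h1 | h1
  · subst h1; simp
  · obtain ⟨hb0, hb1⟩ := aux_bounds hu.1 h1
    have hun : 0 ≤ u ^ n := pow_nonneg hu.1.le n
    have hun1 : u ^ n ≤ 1 := pow_le_one₀ hu.1.le h1.le
    rw [abs_of_nonneg (mul_nonneg hun hb0)]
    nlinarith

lemma r_integrable (n : ℕ) :
    IntervalIntegrable (fun u : ℝ => (u ^ n - u ^ (n+1)) / Real.log u) volume 0 1 := by
  have hm : Measurable (fun u : ℝ => (u ^ n - u ^ (n+1)) / Real.log u) :=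
    ((measurable_id.pow_const n).sub (measurable_id.pow_const (n+1))).div Real.measurable_log
  refine boundedII hm (fun u hu => ?_)
  rcases eq_or_lt_of_le hu.2 with h1 | h1
  · subst h1; simp
  · have hL : Real.log u < 0 := Real.log_neg hu.1 h1
    have hle : 1 - u ≤ -Real.log u := by
      have := Real.log_le_sub_one_of_pos hu.1; linarith
    have hun : 0 ≤ u ^ n := pow_nonneg hu.1.le n
    have hun1 : u ^ n ≤ 1 := pow_le_one₀ hu.1.le h1.le
    have hnum : u ^ n - u ^ (n+1) = u ^ n * (1 - u) := by ring
    rw [abs_div, abs_of_neg hL, div_le_one (by linarith), hnum,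
      abs_of_nonneg (by nlinarith)]
    nlinarith


lemma J_eval (n : ℕ) : ∫ u in (0:ℝ)..1, ((u:ℝ) ^ n - u ^ (n+1)) / Real.log u
    = Real.log (n+1) - Real.log (n+2) := by
  set μ := volume.restrict (Set.Ioc (0:ℝ) 1) with hμ
  set ν := volume.restrict (Set.Ioc (n:ℝ) (n+1)) with hν
  have hn0 : (0:ℝ) ≤ n := Nat.cast_nonneg n
  -- integrability of (u,s) ↦ exp (s * log u)
  have hFm : Measurable (fun p : ℝ × ℝ => Real.exp (p.2 * Real.log p.1)) :=
    (measurable_snd.mul (Real.measurable_log.comp measurable_fst)).exp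
  have hprod : μ.prod ν = (volume.prod volume).restrict
      ((Set.Ioc (0:ℝ) 1) ×ˢ (Set.Ioc (n:ℝ) (n+1))) := (Measure.prod_restrict _ _)
  have hF_int : Integrable (Function.uncurry fun u s : ℝ => Real.exp (s * Real.log u)) (μ.prod ν) := by
    refine ⟨hFm.aestronglyMeasurable, ?_⟩
    apply MeasureTheory.HasFiniteIntegral.of_bounded (C := 1)
    rw [hprod]
    filter_upwards [ae_restrict_mem (measurableSet_Ioc.prod measurableSet_Ioc)] with p hp
    obtain ⟨hp1, hp2⟩ := hp
    have hL : Real.log p.1 ≤ 0 := Real.log_nonpos hp1.1.le hp1.2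
    have hs : 0 ≤ p.2 := le_trans hn0 hp2.1.le
    have : p.2 * Real.log p.1 ≤ 0 := mul_nonpos_of_nonneg_of_nonpos hs hL
    simp only [Function.uncurry, Real.norm_eq_abs, abs_of_nonneg (Real.exp_nonneg _)]
    calc Real.exp (p.2 * Real.log p.1) ≤ Real.exp 0 := Real.exp_le_exp.2 this
      _ = 1 := Real.exp_zero
  have swap := MeasureTheory.integral_integral_swap hF_int
  -- LHS: inner integral over s
  have hμIoo : μ = volume.restrict (Set.Ioo (0:ℝ) 1) :=
    (Measure.restrict_congr_set Ioo_ae_eq_Ioc).symm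
  have haeIoo : ∀ᵐ u ∂μ, u ∈ Set.Ioo (0:ℝ) 1 := by
    rw [hμIoo]; exact ae_restrict_mem measurableSet_Ioo
  have hinner : ∀ u ∈ Set.Ioo (0:ℝ) 1,
      (∫ s, Real.exp (s * Real.log u) ∂ν) = (u ^ (n+1) - u ^ n) / Real.log u := by
    intro u hu
    have hL : Real.log u < 0 := Real.log_neg hu.1 hu.2
    have hLne : Real.log u ≠ 0 := hL.ne
    rw [hν, ← intervalIntegral.integral_of_le (by linarith : (n:ℝ) ≤ n+1)]
    have : ∀ s : ℝ, Real.exp (s * Real.log u) = Real.exp (Real.log u * s) := by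
      intro s; rw [mul_comm]
    simp_rw [this]
    rw [intervalIntegral.integral_comp_mul_left (fun x => Real.exp x) hLne]
    rw [integral_exp]
    have e : ∀ m : ℕ, Real.exp (Real.log u * (m:ℝ)) = u ^ m := by
      intro m
      rw [mul_comm, Real.exp_nat_mul, Real.exp_log hu.1]
    have e1 : Real.exp (Real.log u * ((n:ℝ)+1)) = u ^ (n+1) := by
      rw [show ((n:ℝ)+1) = ((n+1 : ℕ) : ℝ) by push_cast; ring, e]
    rw [e1, e n, smul_eq_mul, inv_mul_eq_div]
  have hLHS : (∫ u, (∫ s, Real.exp (s * Real.log u) ∂ν) ∂μ)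
      = ∫ u, (u ^ (n+1) - u ^ n) / Real.log u ∂μ :=
    integral_congr_ae (haeIoo.mono fun u hu => hinner u hu)
  have hinner2 : ∀ s ∈ Set.Ioc (n:ℝ) (n+1),
      (∫ u, Real.exp (s * Real.log u) ∂μ) = 1/(s+1) := by
    intro s hs
    have hs0 : 0 < s := lt_of_le_of_lt hn0 hs.1
    have hcg : ∀ u ∈ Set.Ioc (0:ℝ) 1, Real.exp (s * Real.log u) = u ^ s := fun u hu => by
      rw [Real.rpow_def_of_pos hu.1, mul_comm]
    rw [hμ, setIntegral_congr_fun measurableSet_Ioc hcg,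
      ← intervalIntegral.integral_of_le zero_le_one,
      integral_rpow (Or.inl (by linarith : (-1:ℝ) < s)),
      Real.one_rpow, Real.zero_rpow (by linarith : s + 1 ≠ 0)]
    ring
  have hRHS : (∫ s, (∫ u, Real.exp (s * Real.log u) ∂μ) ∂ν)
      = Real.log (n+2) - Real.log (n+1) := by
    rw [hν, setIntegral_congr_fun measurableSet_Ioc hinner2,
      ← intervalIntegral.integral_of_le (by linarith : (n:ℝ) ≤ n+1)]
    have hshift : (∫ s in (n:ℝ)..(n:ℝ)+1, 1/(s+1))
        = ∫ x in ((n:ℝ)+1)..((n:ℝ)+1+1), 1/x :=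
      intervalIntegral.integral_comp_add_right (fun x => 1/x) 1
    rw [hshift, integral_one_div (by
      intro hmem
      rw [Set.mem_uIcc] at hmem
      rcases hmem with h | h <;> [linarith [h.1]; linarith [h.1]]),
      Real.log_div (by positivity) (by positivity)]
    push_cast; ring_nf
  have key : (∫ u, (u ^ (n+1) - u ^ n) / Real.log u ∂μ)
      = Real.log (n+2) - Real.log (n+1) := by
    rw [← hLHS, swap, hRHS]
  rw [intervalIntegral.integral_of_le zero_le_one]
  have hneg : ∀ u : ℝ, (u ^ n - u ^ (n+1)) / Real.log u
      = -((u ^ (n+1) - u ^ n) / Real.log u) := by intro u; ring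
  simp_rw [hneg]
  rw [MeasureTheory.integral_neg, key]
  ring

lemma step (n : ℕ) :
    (∫ u in (0:ℝ)..1, u^n * (1 / Real.log u + 1 / (1 - u)))
      - ∫ u in (0:ℝ)..1, u^(n+1) * (1 / Real.log u + 1 / (1 - u))
    = 1/((n:ℝ)+1) + Real.log ((n:ℝ)+1) - Real.log ((n:ℝ)+2) := by
  rw [← intervalIntegral.integral_sub (f_integrable n) (f_integrable (n+1))]
  have hne : ∀ᵐ x : ℝ ∂volume, x ≠ 1 := by
    simp [ae_iff]
  have hcongr : ∀ᵐ x ∂(volume : Measure ℝ), x ∈ Set.uIoc (0:ℝ) 1 →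
      (x^n * (1 / Real.log x + 1 / (1 - x)) - x^(n+1) * (1 / Real.log x + 1 / (1 - x)))
      = (x^n - x^(n+1)) / Real.log x + x^n := by
    filter_upwards [hne] with x hx _
    have h1x : 1 - x ≠ 0 := sub_ne_zero.2 (Ne.symm hx)
    have e1 : (x^n - x^(n+1)) * (1/(1-x)) = x^n := by
      rw [show x^n - x^(n+1) = x^n * (1-x) by ring, mul_one_div, mul_div_assoc,
        div_self h1x, mul_one]
    have e2 : x^n * (1 / Real.log x + 1 / (1 - x)) - x^(n+1) * (1 / Real.log x + 1 / (1 - x))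
        = (x^n - x^(n+1)) * (1/Real.log x) + (x^n - x^(n+1)) * (1/(1-x)) := by ring
    rw [e2, e1, mul_one_div]
  rw [intervalIntegral.integral_congr_ae hcongr]
  rw [intervalIntegral.integral_add (r_integrable n)
    ((continuous_pow n).intervalIntegrable 0 1)]
  rw [J_eval n, integral_pow]
  push_cast
  ring

lemma I_bounds (n : ℕ) :
    0 ≤ (∫ u in (0:ℝ)..1, u^n * (1 / Real.log u + 1 / (1 - u))) ∧
    (∫ u in (0:ℝ)..1, u^n * (1 / Real.log u + 1 / (1 - u))) ≤ 1/((n:ℝ)+1) := by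
  have hpt : ∀ u ∈ Set.Icc (0:ℝ) 1,
      0 ≤ u^n * (1 / Real.log u + 1 / (1 - u)) ∧
      u^n * (1 / Real.log u + 1 / (1 - u)) ≤ u^n := by
    intro u hu
    rcases eq_or_lt_of_le hu.1 with h0 | h0
    · subst h0; simp
    rcases eq_or_lt_of_le hu.2 with h1 | h1
    · subst h1
      constructor <;> simp
    · obtain ⟨hb0, hb1⟩ := aux_bounds h0 h1
      have hun : 0 ≤ u ^ n := pow_nonneg hu.1 n
      exact ⟨mul_nonneg hun hb0, by nlinarith⟩
  constructor
  · exact intervalIntegral.integral_nonneg zero_le_one (fun u hu => (hpt u hu).1)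
  · have h2 := intervalIntegral.integral_mono_on zero_le_one (f_integrable n)
      ((continuous_pow n).intervalIntegrable 0 1) (fun u hu => (hpt u hu).2)
    have h3 : (∫ u in (0:ℝ)..1, u^n) = 1/((n:ℝ)+1) := by
      rw [integral_pow]; push_cast; ring
    linarith

lemma H_eq_harmonic (m : ℕ) : H m = (harmonic m : ℝ) := by
  rw [H, harmonic]
  push_cast
  simp [one_div]

theorem integral_eq_gamma_sub_S (n : ℕ) :
    ∫ u in (0:ℝ)..1, u^n * (1 / Real.log u + 1 / (1 - u))
      = Real.eulerMascheroniConstant - (H n - Real.log ((n : ℝ) + 1)) := by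
  set I : ℕ → ℝ := fun m => ∫ u in (0:ℝ)..1, u^m * (1 / Real.log u + 1 / (1 - u)) with hI
  set S : ℕ → ℝ := fun m => H m - Real.log ((m : ℝ) + 1) with hS
  have hS_seq : ∀ m : ℕ, S m = Real.eulerMascheroniSeq m := by
    intro m
    simp only [hS, Real.eulerMascheroniSeq, H_eq_harmonic]
  -- the difference is constant
  have hD : ∀ m : ℕ, I m - (Real.eulerMascheroniConstant - S m)
      = I 0 - (Real.eulerMascheroniConstant - S 0) := by
    intro m
    induction m with
    | zero => rfl
    | succ k ih =>
      have hstep := step k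
      have hHsucc : H (k+1) = H k + 1/((k:ℝ)+1) := by
        rw [H, H, Finset.sum_range_succ]
      have hSsucc : S (k+1) - S k = 1/((k:ℝ)+1) + Real.log ((k:ℝ)+1) - Real.log ((k:ℝ)+2) := by
        simp only [hS]
        rw [hHsucc]
        push_cast
        rw [show ((k:ℝ) + 1 + 1) = (k:ℝ) + 2 by ring]
        ring
      have : I (k+1) - (Real.eulerMascheroniConstant - S (k+1))
          = I k - (Real.eulerMascheroniConstant - S k) := by
        have hIk : I k - I (k+1) = 1/((k:ℝ)+1) + Real.log ((k:ℝ)+1) - Real.log ((k:ℝ)+2) :=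
          hstep
        linear_combination hSsucc - hIk
      rw [this, ih]
  -- both tend to zero
  have htendI : Filter.Tendsto I Filter.atTop (nhds 0) := by
    apply squeeze_zero_norm (a := fun m : ℕ => 1/((m:ℝ)+1))
    · intro m
      rw [Real.norm_eq_abs, abs_le]
      obtain ⟨h1, h2⟩ := I_bounds m
      constructor
      · have : (0:ℝ) ≤ 1/((m:ℝ)+1) := by positivity
        linarith
      · exact h2
    · exact tendsto_one_div_add_atTop_nhds_zero_nat
  have htendS : Filter.Tendsto (fun m : ℕ => Real.eulerMascheroniConstant - S m)
      Filter.atTop (nhds 0) := by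
    have h := Filter.Tendsto.sub
      (tendsto_const_nhds (x := Real.eulerMascheroniConstant) (f := Filter.atTop (α := ℕ)))
      Real.tendsto_eulerMascheroniSeq
    rw [sub_self] at h
    refine h.congr fun m => ?_
    rw [hS_seq]
  have hzero : Filter.Tendsto (fun m : ℕ => I m - (Real.eulerMascheroniConstant - S m))
      Filter.atTop (nhds 0) := by
    simpa using htendI.sub htendS
  have hconst : Filter.Tendsto (fun m : ℕ => I m - (Real.eulerMascheroniConstant - S m))
      Filter.atTop (nhds (I 0 - (Real.eulerMascheroniConstant - S 0))) := by
    refine tendsto_const_nhds.congr fun m => (hD m).symm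
  have h0 : I 0 - (Real.eulerMascheroniConstant - S 0) = 0 :=
    (tendsto_nhds_unique hconst hzero)
  have := hD n
  rw [h0] at this
  have : I n = Real.eulerMascheroniConstant - S n := by linarith
  exact this
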